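/- Let α be a C*-factorization of H and β a C*-factorization of K over a C*-base (𝔥,𝔅,𝔅†) and its opposite. Then there is a unitary Σ from the relative tensor product H ⊗_{α,𝔥,β} K onto K ⊗_{β,𝔥,α} H determined by ξ ⊗ ζ ⊗ η ↦ η ⊗ ζ ⊗ ξ for ξ ∈ α, ζ ∈ 𝔥, η ∈ β (where both spaces are realized as completions of α ⊙ 𝔥 ⊙ β, resp. β ⊙ 𝔥 ⊙ α). -/

import Mathlib

noncomputable section
open ContinuousLinearMap

/-- Closed linear span of a subset of a complex normed space. -/
def clspan {E : Type*} [NormedAddCommGroup E] [NormedSpace ℂ E] (S : Set E) : Set E :=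
  ((Submodule.span ℂ S).topologicalClosure : Set E)

/-- Auxiliary: two Hilbert spaces with generating families having matching inner products
are isometrically isomorphic via a map sending generators to generators. -/
theorem exists_isometry_of_inner_eq {ι T₁ T₂ : Type*}
    [NormedAddCommGroup T₁] [InnerProductSpace ℂ T₁] [CompleteSpace T₁]
    [NormedAddCommGroup T₂] [InnerProductSpace ℂ T₂] [CompleteSpace T₂]
    (q₁ : ι → T₁) (q₂ : ι → T₂)
    (hq : ∀ i j, (inner ℂ (q₁ i) (q₁ j) : ℂ) = inner ℂ (q₂ i) (q₂ j))
    (hd₁ : (Submodule.span ℂ (Set.range q₁)).topologicalClosure = ⊤)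
    (hd₂ : (Submodule.span ℂ (Set.range q₂)).topologicalClosure = ⊤) :
    ∃ Sg : T₁ ≃ₗᵢ[ℂ] T₂, ∀ i, Sg (q₁ i) = q₂ i := by
  classical
  set L₁ : (ι →₀ ℂ) →ₗ[ℂ] T₁ := Finsupp.linearCombination ℂ q₁ with hL₁
  set L₂ : (ι →₀ ℂ) →ₗ[ℂ] T₂ := Finsupp.linearCombination ℂ q₂ with hL₂
  have hLinner : ∀ v w : ι →₀ ℂ, (inner ℂ (L₁ v) (L₁ w) : ℂ) = inner ℂ (L₂ v) (L₂ w) := by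
    intro v
    induction v using Finsupp.induction_linear with
    | zero => intro w; simp
    | add f g hf hg => intro w; simp only [map_add, inner_add_left, hf w, hg w]
    | single i c =>
      intro w
      induction w using Finsupp.induction_linear with
      | zero => simp
      | add f g hf hg => simp only [map_add, inner_add_right, hf, hg]
      | single j d =>
        simp only [hL₁, hL₂, Finsupp.linearCombination_single, inner_smul_left,
          inner_smul_right, hq i j]
  have hLnorm : ∀ v, ‖L₁ v‖ = ‖L₂ v‖ := by
    intro v
    rw [norm_eq_sqrt_re_inner (𝕜 := ℂ), norm_eq_sqrt_re_inner (𝕜 := ℂ), hLinner v v]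
  have hker₁₂ : LinearMap.ker L₁ ≤ LinearMap.ker L₂ := by
    intro v hv
    rw [LinearMap.mem_ker] at hv ⊢
    rw [← norm_eq_zero, ← hLnorm, hv, norm_zero]
  have hker₂₁ : LinearMap.ker L₂ ≤ LinearMap.ker L₁ := by
    intro v hv
    rw [LinearMap.mem_ker] at hv ⊢
    rw [← norm_eq_zero, hLnorm, hv, norm_zero]
  -- maps between ranges
  let e₁ := L₁.quotKerEquivRange
  let e₂ := L₂.quotKerEquivRange
  let f₁ : LinearMap.range L₁ →ₗ[ℂ] T₂ :=
    ((LinearMap.ker L₁).liftQ L₂ hker₁₂).comp e₁.symm.toLinearMap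
  let f₂ : LinearMap.range L₂ →ₗ[ℂ] T₁ :=
    ((LinearMap.ker L₂).liftQ L₁ hker₂₁).comp e₂.symm.toLinearMap
  have hf₁ : ∀ v : ι →₀ ℂ, f₁ ⟨L₁ v, LinearMap.mem_range_self _ v⟩ = L₂ v := by
    intro v
    have h : e₁.symm ⟨L₁ v, LinearMap.mem_range_self _ v⟩ = Submodule.Quotient.mk v :=
      e₁.symm_apply_eq.mpr (Subtype.ext (L₁.quotKerEquivRange_apply_mk v).symm)
    simp only [f₁, LinearMap.comp_apply, LinearEquiv.coe_toLinearMap, h,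
      Submodule.liftQ_apply]
  have hf₂ : ∀ v : ι →₀ ℂ, f₂ ⟨L₂ v, LinearMap.mem_range_self _ v⟩ = L₁ v := by
    intro v
    have h : e₂.symm ⟨L₂ v, LinearMap.mem_range_self _ v⟩ = Submodule.Quotient.mk v :=
      e₂.symm_apply_eq.mpr (Subtype.ext (L₂.quotKerEquivRange_apply_mk v).symm)
    simp only [f₂, LinearMap.comp_apply, LinearEquiv.coe_toLinearMap, h,
      Submodule.liftQ_apply]
  have hf₁norm : ∀ x : LinearMap.range L₁, ‖f₁ x‖ = ‖x‖ := by
    rintro ⟨x, v, rfl⟩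
    rw [show (⟨L₁ v, ⟨v, rfl⟩⟩ : LinearMap.range L₁) = ⟨L₁ v, LinearMap.mem_range_self _ v⟩
      from rfl, hf₁ v]
    exact (hLnorm v).symm
  have hf₂norm : ∀ x : LinearMap.range L₂, ‖f₂ x‖ = ‖x‖ := by
    rintro ⟨x, v, rfl⟩
    rw [show (⟨L₂ v, ⟨v, rfl⟩⟩ : LinearMap.range L₂) = ⟨L₂ v, LinearMap.mem_range_self _ v⟩
      from rfl, hf₂ v]
    exact hLnorm v
  let F₁ : LinearMap.range L₁ →ₗᵢ[ℂ] T₂ := ⟨f₁, hf₁norm⟩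
  let F₂ : LinearMap.range L₂ →ₗᵢ[ℂ] T₁ := ⟨f₂, hf₂norm⟩
  have hdense₁ : Dense ((LinearMap.range L₁ : Submodule ℂ T₁) : Set T₁) := by
    rw [Submodule.dense_iff_topologicalClosure_eq_top, hL₁,
      Finsupp.range_linearCombination]
    exact hd₁
  have hdense₂ : Dense ((LinearMap.range L₂ : Submodule ℂ T₂) : Set T₂) := by
    rw [Submodule.dense_iff_topologicalClosure_eq_top, hL₂,
      Finsupp.range_linearCombination]
    exact hd₂
  have hdr₁ : DenseRange ((LinearMap.range L₁).subtypeL) := hdense₁.denseRange_val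
  have hdr₂ : DenseRange ((LinearMap.range L₂).subtypeL) := hdense₂.denseRange_val
  let G₁ : T₁ →L[ℂ] T₂ :=
    F₁.toContinuousLinearMap.extend (LinearMap.range L₁).subtypeL
  let G₂ : T₂ →L[ℂ] T₁ :=
    F₂.toContinuousLinearMap.extend (LinearMap.range L₂).subtypeL
  have hG₁ : ∀ v, G₁ (L₁ v) = L₂ v := by
    intro v
    have h := ContinuousLinearMap.extend_eq F₁.toContinuousLinearMap
      (e := (LinearMap.range L₁).subtypeL) hdr₁ isUniformEmbedding_subtype_val.isUniformInducing
      ⟨L₁ v, LinearMap.mem_range_self _ v⟩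
    exact h.trans (hf₁ v)
  have hG₂ : ∀ v, G₂ (L₂ v) = L₁ v := by
    intro v
    have h := ContinuousLinearMap.extend_eq F₂.toContinuousLinearMap
      (e := (LinearMap.range L₂).subtypeL) hdr₂ isUniformEmbedding_subtype_val.isUniformInducing
      ⟨L₂ v, LinearMap.mem_range_self _ v⟩
    exact h.trans (hf₂ v)
  have hG₁norm : ∀ x : T₁, ‖G₁ x‖ = ‖x‖ := by
    have hcl : IsClosed {x : T₁ | ‖G₁ x‖ = ‖x‖} :=
      isClosed_eq G₁.continuous.norm continuous_norm
    intro x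
    have hx : x ∈ closure ((LinearMap.range L₁ : Submodule ℂ T₁) : Set T₁) := by
      rw [hdense₁.closure_eq]; trivial
    refine hcl.closure_subset_iff.mpr ?_ hx
    rintro y ⟨v, rfl⟩
    show ‖G₁ (L₁ v)‖ = ‖L₁ v‖
    rw [hG₁ v]
    exact (hLnorm v).symm
  have hinv₁ : ∀ x : T₁, G₂ (G₁ x) = x := by
    have hcl : IsClosed {x : T₁ | G₂ (G₁ x) = x} :=
      isClosed_eq (G₂.continuous.comp G₁.continuous) continuous_id
    intro x
    have hx : x ∈ closure ((LinearMap.range L₁ : Submodule ℂ T₁) : Set T₁) := by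
      rw [hdense₁.closure_eq]; trivial
    refine hcl.closure_subset_iff.mpr ?_ hx
    rintro y ⟨v, rfl⟩
    show G₂ (G₁ (L₁ v)) = L₁ v
    rw [hG₁ v, hG₂ v]
  have hinv₂ : ∀ x : T₂, G₁ (G₂ x) = x := by
    have hcl : IsClosed {x : T₂ | G₁ (G₂ x) = x} :=
      isClosed_eq (G₁.continuous.comp G₂.continuous) continuous_id
    intro x
    have hx : x ∈ closure ((LinearMap.range L₂ : Submodule ℂ T₂) : Set T₂) := by
      rw [hdense₂.closure_eq]; trivial
    refine hcl.closure_subset_iff.mpr ?_ hx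
    rintro y ⟨v, rfl⟩
    show G₁ (G₂ (L₂ v)) = L₂ v
    rw [hG₂ v, hG₁ v]
  let lin : T₁ ≃ₗ[ℂ] T₂ := LinearEquiv.ofLinear (G₁ : T₁ →ₗ[ℂ] T₂) (G₂ : T₂ →ₗ[ℂ] T₁)
    (LinearMap.ext fun x => by simpa using hinv₂ x)
    (LinearMap.ext fun x => by simpa using hinv₁ x)
  refine ⟨⟨lin, fun x => hG₁norm x⟩, ?_⟩
  intro i
  have h := hG₁ (Finsupp.single i 1)
  simp only [hL₁, hL₂, Finsupp.linearCombination_single, one_smul] at h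
  exact h

/-- Let `α` be a C*-factorization of `H` over `(𝔥,𝔅,𝔅†)` and `β` a
C*-factorization of `K` over the opposite base.  Realize the relative tensor products
`H ⊗_{α,𝔥,β} K` and `K ⊗_{β,𝔥,α} H` as completions `T₁` of `α ⊙ 𝔥 ⊙ β` and `T₂` of
`β ⊙ 𝔥 ⊙ α` with inner products `⟨ξ⊗ζ⊗η, ξ'⊗ζ'⊗η'⟩ = ⟨ζ, (ξ*ξ')(η*η')ζ'⟩` resp.
`⟨η⊗ζ⊗ξ, η'⊗ζ'⊗ξ'⟩ = ⟨ζ, (η*η')(ξ*ξ')ζ'⟩`.  Then there is a unitary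
`Σ : T₁ ≃ T₂` with `Σ(ξ ⊗ ζ ⊗ η) = η ⊗ ζ ⊗ ξ`. -/

theorem stmt9
    {𝔥 H K T₁ T₂ : Type*} [NormedAddCommGroup 𝔥] [InnerProductSpace ℂ 𝔥] [CompleteSpace 𝔥]
    [NormedAddCommGroup H] [InnerProductSpace ℂ H] [CompleteSpace H]
    [NormedAddCommGroup K] [InnerProductSpace ℂ K] [CompleteSpace K]
    [NormedAddCommGroup T₁] [InnerProductSpace ℂ T₁] [CompleteSpace T₁]
    [NormedAddCommGroup T₂] [InnerProductSpace ℂ T₂] [CompleteSpace T₂]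
    (𝔅 𝔅d : Set (𝔥 →L[ℂ] 𝔥))
    (hcomm : ∀ b ∈ 𝔅, ∀ c ∈ 𝔅d, b ∘L c = c ∘L b)
    -- `α` is a C*-factorization of `H` w.r.t. `(𝔥,𝔅,𝔅†)`:
    (α : Set (𝔥 →L[ℂ] H))
    (hαclosed : clspan α = α)
    (hαα : clspan (Set.image2 (fun (ξ ξ' : 𝔥 →L[ℂ] H) => adjoint ξ ∘L ξ') α α) = 𝔅)
    (hα𝔅 : clspan (Set.image2 (fun (ξ : 𝔥 →L[ℂ] H) (b : 𝔥 →L[ℂ] 𝔥) => ξ ∘L b) α 𝔅) = α)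
    (hα𝔥 : (Submodule.span ℂ {x : H | ∃ ξ ∈ α, ∃ ζ : 𝔥, ξ ζ = x}).topologicalClosure = ⊤)
    -- `β` is a C*-factorization of `K` w.r.t. the opposite base `(𝔥,𝔅†,𝔅)`:
    (β : Set (𝔥 →L[ℂ] K))
    (hβclosed : clspan β = β)
    (hββ : clspan (Set.image2 (fun (η η' : 𝔥 →L[ℂ] K) => adjoint η ∘L η') β β) = 𝔅d)
    (hβ𝔅d : clspan (Set.image2 (fun (η : 𝔥 →L[ℂ] K) (b : 𝔥 →L[ℂ] 𝔥) => η ∘L b) β 𝔅d) = β)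
    (hβ𝔥 : (Submodule.span ℂ {x : K | ∃ η ∈ β, ∃ ζ : 𝔥, η ζ = x}).topologicalClosure = ⊤)
    -- `T₁`, `p₁` realize `H ⊗_{α,𝔥,β} K` as completion of `α ⊙ 𝔥 ⊙ β`:
    (p₁ : (𝔥 →L[ℂ] H) → 𝔥 → (𝔥 →L[ℂ] K) → T₁)
    (hp₁add₁ : ∀ ξ ∈ α, ∀ ξ' ∈ α, ∀ ζ, ∀ η ∈ β, p₁ (ξ + ξ') ζ η = p₁ ξ ζ η + p₁ ξ' ζ η)
    (hp₁add₂ : ∀ ξ ∈ α, ∀ ζ ζ' : 𝔥, ∀ η ∈ β, p₁ ξ (ζ + ζ') η = p₁ ξ ζ η + p₁ ξ ζ' η)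
    (hp₁add₃ : ∀ ξ ∈ α, ∀ ζ, ∀ η ∈ β, ∀ η' ∈ β, p₁ ξ ζ (η + η') = p₁ ξ ζ η + p₁ ξ ζ η')
    (hp₁smul : ∀ ξ ∈ α, ∀ (c : ℂ) (ζ : 𝔥), ∀ η ∈ β, p₁ ξ (c • ζ) η = c • p₁ ξ ζ η)
    (hp₁dense : (Submodule.span ℂ
        {x : T₁ | ∃ ξ ∈ α, ∃ ζ : 𝔥, ∃ η ∈ β, p₁ ξ ζ η = x}).topologicalClosure = ⊤)
    (hp₁inner : ∀ ξ ∈ α, ∀ ξ' ∈ α, ∀ η ∈ β, ∀ η' ∈ β, ∀ ζ ζ' : 𝔥,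
      inner ℂ (p₁ ξ ζ η) (p₁ ξ' ζ' η')
        = (inner ℂ ζ (((adjoint ξ ∘L ξ') ∘L (adjoint η ∘L η')) ζ') : ℂ))
    -- `T₂`, `p₂` realize `K ⊗_{β,𝔥,α} H` as completion of `β ⊙ 𝔥 ⊙ α`:
    (p₂ : (𝔥 →L[ℂ] K) → 𝔥 → (𝔥 →L[ℂ] H) → T₂)
    (hp₂add₁ : ∀ η ∈ β, ∀ η' ∈ β, ∀ ζ, ∀ ξ ∈ α, p₂ (η + η') ζ ξ = p₂ η ζ ξ + p₂ η' ζ ξ)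
    (hp₂add₂ : ∀ η ∈ β, ∀ ζ ζ' : 𝔥, ∀ ξ ∈ α, p₂ η (ζ + ζ') ξ = p₂ η ζ ξ + p₂ η ζ' ξ)
    (hp₂add₃ : ∀ η ∈ β, ∀ ζ, ∀ ξ ∈ α, ∀ ξ' ∈ α, p₂ η ζ (ξ + ξ') = p₂ η ζ ξ + p₂ η ζ ξ')
    (hp₂smul : ∀ η ∈ β, ∀ (c : ℂ) (ζ : 𝔥), ∀ ξ ∈ α, p₂ η (c • ζ) ξ = c • p₂ η ζ ξ)
    (hp₂dense : (Submodule.span ℂ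
        {x : T₂ | ∃ η ∈ β, ∃ ζ : 𝔥, ∃ ξ ∈ α, p₂ η ζ ξ = x}).topologicalClosure = ⊤)
    (hp₂inner : ∀ η ∈ β, ∀ η' ∈ β, ∀ ξ ∈ α, ∀ ξ' ∈ α, ∀ ζ ζ' : 𝔥,
      inner ℂ (p₂ η ζ ξ) (p₂ η' ζ' ξ')
        = (inner ℂ ζ (((adjoint η ∘L η') ∘L (adjoint ξ ∘L ξ')) ζ') : ℂ)) :
    ∃ Sg : T₁ ≃ₗᵢ[ℂ] T₂, ∀ ξ ∈ α, ∀ (ζ : 𝔥), ∀ η ∈ β, Sg (p₁ ξ ζ η) = p₂ η ζ ξ := by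
    classical
  obtain ⟨Sg, hSg⟩ := exists_isometry_of_inner_eq
    (fun t : {ξ : 𝔥 →L[ℂ] H // ξ ∈ α} × 𝔥 × {η : 𝔥 →L[ℂ] K // η ∈ β} =>
      p₁ t.1.1 t.2.1 t.2.2.1)
    (fun t => p₂ t.2.2.1 t.2.1 t.1.1)
    (by
      rintro ⟨⟨ξ, hξ⟩, ζ, ⟨η, hη⟩⟩ ⟨⟨ξ', hξ'⟩, ζ', ⟨η', hη'⟩⟩
      simp only
      rw [hp₁inner ξ hξ ξ' hξ' η hη η' hη' ζ ζ', hp₂inner η hη η' hη' ξ hξ ξ' hξ' ζ ζ']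
      have hb : adjoint ξ ∘L ξ' ∈ 𝔅 := by
        rw [← hαα]
        exact Submodule.le_topologicalClosure _
          (Submodule.subset_span (Set.mem_image2_of_mem hξ hξ'))
      have hc : adjoint η ∘L η' ∈ 𝔅d := by
        rw [← hββ]
        exact Submodule.le_topologicalClosure _
          (Submodule.subset_span (Set.mem_image2_of_mem hη hη'))
      rw [hcomm _ hb _ hc])
    (by
      have hr : Set.range (fun t : {ξ : 𝔥 →L[ℂ] H // ξ ∈ α} × 𝔥 × {η : 𝔥 →L[ℂ] K // η ∈ β} =>
          p₁ t.1.1 t.2.1 t.2.2.1) = {x : T₁ | ∃ ξ ∈ α, ∃ ζ : 𝔥, ∃ η ∈ β, p₁ ξ ζ η = x} := by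
        ext x
        constructor
        · rintro ⟨⟨⟨ξ, hξ⟩, ζ, ⟨η, hη⟩⟩, rfl⟩
          exact ⟨ξ, hξ, ζ, η, hη, rfl⟩
        · rintro ⟨ξ, hξ, ζ, η, hη, rfl⟩
          exact ⟨⟨⟨ξ, hξ⟩, ζ, ⟨η, hη⟩⟩, rfl⟩
      rw [hr]
      exact hp₁dense)
    (by
      have hr : Set.range (fun t : {ξ : 𝔥 →L[ℂ] H // ξ ∈ α} × 𝔥 × {η : 𝔥 →L[ℂ] K // η ∈ β} =>
          p₂ t.2.2.1 t.2.1 t.1.1) = {x : T₂ | ∃ η ∈ β, ∃ ζ : 𝔥, ∃ ξ ∈ α, p₂ η ζ ξ = x} := by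
        ext x
        constructor
        · rintro ⟨⟨⟨ξ, hξ⟩, ζ, ⟨η, hη⟩⟩, rfl⟩
          exact ⟨η, hη, ζ, ξ, hξ, rfl⟩
        · rintro ⟨η, hη, ζ, ξ, hξ, rfl⟩
          exact ⟨⟨⟨ξ, hξ⟩, ζ, ⟨η, hη⟩⟩, rfl⟩
      rw [hr]
      exact hp₂dense)
  exact ⟨Sg, fun ξ hξ ζ η hη => hSg ⟨⟨ξ, hξ⟩, ζ, ⟨η, hη⟩⟩⟩
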